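/- arXiv:0705.1142 — 2 statements merged into one kernel-verified Lean document; each statement's English description precedes it below -/
import Mathlib

section
/- Let T ⊂ ℝ² be the right triangle with vertices (0,0), (2,0), and (0,1) (legs of lengths 1 and 2 and hypotenuse √5). Then there exist five isometries g₁, …, g₅ of the Euclidean plane such that the five images g₁(T), …, g₅(T) have pairwise disjoint interiors and their union equals the inflated triangle √5·T = {√5·x : x ∈ T}, i.e. the right triangle with vertices (0,0), (2√5,0), and (0,√5). -/
/-- The pinwheel prototile: the right triangle with vertices (0,0), (2,0), (0,1)
(legs 1 and 2, hypotenuse √5) in the Euclidean plane. -/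
noncomputable def pinwheelTriangle : Set (EuclideanSpace ℝ (Fin 2)) :=
  convexHull ℝ {(!₂[0, 0] : EuclideanSpace ℝ (Fin 2)), !₂[2, 0], !₂[0, 1]}

open Set
noncomputable section
namespace PW

abbrev E2 := EuclideanSpace ℝ (Fin 2)

abbrev s5 : ℝ := Real.sqrt 5

lemma s5_pos : (0:ℝ) < s5 := Real.sqrt_pos.2 (by norm_num)

lemma s5_sq : s5 ^ 2 = 5 := Real.sq_sqrt (by norm_num)

/-! ### reflection linear isometries -/

def reflFun (a b : ℝ) (x : E2) : E2 := !₂[a * x 0 + b * x 1, b * x 0 - a * x 1]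

lemma reflFun_isLinear (a b : ℝ) : IsLinearMap ℝ (reflFun a b) := by
  constructor
  · intro x y
    ext i
    fin_cases i <;> simp [reflFun, PiLp.add_apply] <;> ring
  · intro c x
    ext i
    fin_cases i <;> simp [reflFun, PiLp.smul_apply, smul_eq_mul] <;> ring

lemma reflFun_invol (a b : ℝ) (h : a^2 + b^2 = 1) (x : E2) :
    reflFun a b (reflFun a b x) = x := by
  ext i
  fin_cases i
  · simp only [reflFun]; simp; linear_combination (x 0) * h
  · simp only [reflFun]; simp; linear_combination (x 1) * h

def reflLIE (a b : ℝ) (h : a^2 + b^2 = 1) : E2 ≃ₗᵢ[ℝ] E2 :=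
  { toFun := reflFun a b
    invFun := reflFun a b
    left_inv := reflFun_invol a b h
    right_inv := reflFun_invol a b h
    map_add' := (reflFun_isLinear a b).1
    map_smul' := (reflFun_isLinear a b).2
    norm_map' := by
      intro x
      rw [EuclideanSpace.norm_eq, EuclideanSpace.norm_eq]
      congr 1
      simp [reflFun, Fin.sum_univ_two, Real.norm_eq_abs, sq_abs]
      linear_combination (x 0 ^ 2 + x 1 ^ 2) * h }

def gA (a b : ℝ) (h : a^2 + b^2 = 1) (t : E2) : E2 ≃ᵃⁱ[ℝ] E2 :=
  (reflLIE a b h).toAffineIsometryEquiv.trans (AffineIsometryEquiv.constVAdd ℝ E2 t)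

lemma gA_apply (a b : ℝ) (h : a^2 + b^2 = 1) (t x : E2) :
    gA a b h t x = t + reflFun a b x := by
  simp [gA, AffineIsometryEquiv.coe_constVAdd, reflLIE, LinearIsometryEquiv.coe_toAffineIsometryEquiv]

lemma gA_vertex (a b : ℝ) (h : a^2 + b^2 = 1) (t0 t1 p q r0 r1 : ℝ)
    (h0 : t0 + (a*p + b*q) = r0) (h1 : t1 + (b*p - a*q) = r1) :
    gA a b h !₂[t0, t1] !₂[p, q] = !₂[r0, r1] := by
  rw [gA_apply]
  ext i
  fin_cases i <;> simp [reflFun, PiLp.add_apply] <;> linarith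

lemma image_hull (e : E2 ≃ᵃⁱ[ℝ] E2) (a b c : E2) :
    e.toIsometryEquiv '' (convexHull ℝ {a, b, c}) = convexHull ℝ {e a, e b, e c} := by
  rw [AffineIsometryEquiv.coe_toIsometryEquiv]
  have h : ⇑e = ⇑(e.toAffineEquiv.toAffineMap) := rfl
  rw [h, AffineMap.image_convexHull, Set.image_insert_eq, Set.image_insert_eq,
    Set.image_singleton]

/-! ### halfplanes -/

lemma interior_hp (p q c : ℝ) (h : p^2 + q^2 ≠ 0) :
    interior {x : E2 | p * x 0 + q * x 1 ≤ c} = {x : E2 | p * x 0 + q * x 1 < c} := by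
  set f : E2 →L[ℝ] ℝ := p • EuclideanSpace.proj 0 + q • EuclideanSpace.proj 1 with hf
  have hfx : ∀ x : E2, f x = p * x 0 + q * x 1 := by
    intro x; simp [hf, smul_eq_mul]
  have hsurj : Function.Surjective f := by
    intro y
    refine ⟨!₂[p * y / (p^2 + q^2), q * y / (p^2 + q^2)], ?_⟩
    rw [hfx]
    simp only [PiLp.toLp_apply, Matrix.cons_val_zero, Matrix.cons_val_one, Matrix.head_cons]
    field_simp
  have h1 : {x : E2 | p * x 0 + q * x 1 ≤ c} = f ⁻¹' (Iic c) := by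
    ext x; simp [hfx]
  have h2 : {x : E2 | p * x 0 + q * x 1 < c} = f ⁻¹' (Iio c) := by
    ext x; simp [hfx]
  rw [h1, h2, f.interior_preimage hsurj, interior_Iic]

lemma f2_lin (p q : ℝ) : IsLinearMap ℝ (fun x : E2 => p * x 0 + q * x 1) := by
  constructor
  · intro x y; simp [PiLp.add_apply]; ring
  · intro c x; simp [PiLp.smul_apply, smul_eq_mul]; ring

lemma hull3_subset_le {a b c : E2} {p q r : ℝ}
    (ha : p * a 0 + q * a 1 ≤ r) (hb : p * b 0 + q * b 1 ≤ r)
    (hc : p * c 0 + q * c 1 ≤ r) :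
    convexHull ℝ {a, b, c} ⊆ {x : E2 | p * x 0 + q * x 1 ≤ r} := by
  apply convexHull_min _ (convex_halfSpace_le (f2_lin p q) r)
  rintro y (rfl | rfl | rfl) <;> assumption

lemma disj_of_sep (S1 S2 : Set E2) (p q c : ℝ) (hpq : p^2 + q^2 ≠ 0)
    (h1 : S1 ⊆ {x : E2 | p * x 0 + q * x 1 ≤ c})
    (h2 : S2 ⊆ {x : E2 | -p * x 0 + -q * x 1 ≤ -c}) :
    interior S1 ∩ interior S2 = ∅ := by
  rw [Set.eq_empty_iff_forall_notMem]
  rintro x ⟨hx1, hx2⟩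
  have e1 := interior_mono h1 hx1
  have e2 := interior_mono h2 hx2
  rw [interior_hp p q c hpq] at e1
  rw [interior_hp (-p) (-q) (-c) (by simpa [neg_sq] using hpq)] at e2
  simp only [mem_setOf_eq] at e1 e2
  linarith

lemma mem_hull3 {a b c x : E2} {u v w : ℝ} (hu : 0 ≤ u) (hv : 0 ≤ v) (hw : 0 ≤ w)
    (hs : u + v + w = 1)
    (h0 : x 0 = u * a 0 + v * b 0 + w * c 0)
    (h1 : x 1 = u * a 1 + v * b 1 + w * c 1) :
    x ∈ convexHull ℝ ({a, b, c} : Set E2) := by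
  have hx : x = u • a + v • b + w • c := by
    ext i
    fin_cases i <;>
      simp [PiLp.add_apply, PiLp.smul_apply, smul_eq_mul] <;> assumption
  rw [hx]
  have h := (convex_convexHull ℝ ({a, b, c} : Set E2))
  have key := h.sum_mem (t := (Finset.univ : Finset (Fin 3)))
    (w := ![u, v, w]) (z := ![a, b, c]) ?_ ?_ ?_
  · simpa [Fin.sum_univ_three] using key
  · intro i _; fin_cases i <;> simpa
  · simp [Fin.sum_univ_three, hs]
  · intro i _
    fin_cases i <;> exact subset_convexHull ℝ _ (by simp)

lemma hull3_subset_hull {a b c : E2} {S : Set E2}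
    (ha : a ∈ convexHull ℝ S) (hb : b ∈ convexHull ℝ S) (hc : c ∈ convexHull ℝ S) :
    convexHull ℝ {a, b, c} ⊆ convexHull ℝ S := by
  apply convexHull_min _ (convex_convexHull ℝ S)
  rintro y (rfl | rfl | rfl) <;> assumption

lemma union5 {α : Type*} (f : Fin 5 → Set α) :
    (⋃ i, f i) = f 0 ∪ f 1 ∪ f 2 ∪ f 3 ∪ f 4 := by
  ext x
  simp only [Set.mem_iUnion, Set.mem_union]
  constructor
  · rintro ⟨i, hi⟩; fin_cases i <;> tauto
  · rintro ((((h | h) | h) | h) | h)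
    exacts [⟨0, h⟩, ⟨1, h⟩, ⟨2, h⟩, ⟨3, h⟩, ⟨4, h⟩]

end PW
namespace PW

lemma u1 : (-(s5/5))^2 + (-(2*s5/5))^2 = 1 := by linear_combination (1/5) * s5_sq
lemma u2 : (2*s5/5)^2 + (-(s5/5))^2 = 1 := by linear_combination (1/5) * s5_sq
lemma u5 : (-(2*s5/5))^2 + (s5/5)^2 = 1 := by linear_combination (1/5) * s5_sq

def g1 : E2 ≃ᵃⁱ[ℝ] E2 := gA (-(s5/5)) (-(2*s5/5)) u1 !₂[2*s5/5, 4*s5/5]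
def g2 : E2 ≃ᵃⁱ[ℝ] E2 := gA (2*s5/5) (-(s5/5)) u2 !₂[s5/5, 2*s5/5]
def g3 : E2 ≃ᵃⁱ[ℝ] E2 := gA (2*s5/5) (-(s5/5)) u2 !₂[6*s5/5, 2*s5/5]
def g4 : E2 ≃ᵃⁱ[ℝ] E2 := gA (2*s5/5) (-(s5/5)) u2 !₂[2*s5/5, 4*s5/5]
def g5 : E2 ≃ᵃⁱ[ℝ] E2 := gA (-(2*s5/5)) (s5/5) u5 !₂[s5, 0]

abbrev T1 : Set E2 := convexHull ℝ {!₂[2*s5/5, 4*s5/5], !₂[0, 0], !₂[0, s5]}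
abbrev T2 : Set E2 := convexHull ℝ {!₂[s5/5, 2*s5/5], !₂[s5, 0], !₂[0, 0]}
abbrev T3 : Set E2 := convexHull ℝ {!₂[6*s5/5, 2*s5/5], !₂[2*s5, 0], !₂[s5, 0]}
abbrev T4 : Set E2 := convexHull ℝ {!₂[2*s5/5, 4*s5/5], !₂[6*s5/5, 2*s5/5], !₂[s5/5, 2*s5/5]}
abbrev T5 : Set E2 := convexHull ℝ {!₂[s5, 0], !₂[s5/5, 2*s5/5], !₂[6*s5/5, 2*s5/5]}
abbrev TB : Set E2 := convexHull ℝ {!₂[0, 0], !₂[2*s5, 0], !₂[0, s5]}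

lemma img1 : g1.toIsometryEquiv '' pinwheelTriangle = T1 := by
  rw [pinwheelTriangle, image_hull]
  have hA : g1 !₂[0, 0] = !₂[2*s5/5, 4*s5/5] := gA_vertex _ _ _ _ _ _ _ _ _ (by ring) (by ring)
  have hB : g1 !₂[2, 0] = !₂[0, 0] := gA_vertex _ _ _ _ _ _ _ _ _ (by ring) (by ring)
  have hC : g1 !₂[0, 1] = !₂[0, s5] := gA_vertex _ _ _ _ _ _ _ _ _ (by ring) (by ring)
  rw [hA, hB, hC]

lemma img2 : g2.toIsometryEquiv '' pinwheelTriangle = T2 := by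
  rw [pinwheelTriangle, image_hull]
  have hA : g2 !₂[0, 0] = !₂[s5/5, 2*s5/5] := gA_vertex _ _ _ _ _ _ _ _ _ (by ring) (by ring)
  have hB : g2 !₂[2, 0] = !₂[s5, 0] := gA_vertex _ _ _ _ _ _ _ _ _ (by ring) (by ring)
  have hC : g2 !₂[0, 1] = !₂[0, 0] := gA_vertex _ _ _ _ _ _ _ _ _ (by ring) (by ring)
  rw [hA, hB, hC]

lemma img3 : g3.toIsometryEquiv '' pinwheelTriangle = T3 := by
  rw [pinwheelTriangle, image_hull]
  have hA : g3 !₂[0, 0] = !₂[6*s5/5, 2*s5/5] := gA_vertex _ _ _ _ _ _ _ _ _ (by ring) (by ring)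
  have hB : g3 !₂[2, 0] = !₂[2*s5, 0] := gA_vertex _ _ _ _ _ _ _ _ _ (by ring) (by ring)
  have hC : g3 !₂[0, 1] = !₂[s5, 0] := gA_vertex _ _ _ _ _ _ _ _ _ (by ring) (by ring)
  rw [hA, hB, hC]

lemma img4 : g4.toIsometryEquiv '' pinwheelTriangle = T4 := by
  rw [pinwheelTriangle, image_hull]
  have hA : g4 !₂[0, 0] = !₂[2*s5/5, 4*s5/5] := gA_vertex _ _ _ _ _ _ _ _ _ (by ring) (by ring)
  have hB : g4 !₂[2, 0] = !₂[6*s5/5, 2*s5/5] := gA_vertex _ _ _ _ _ _ _ _ _ (by ring) (by ring)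
  have hC : g4 !₂[0, 1] = !₂[s5/5, 2*s5/5] := gA_vertex _ _ _ _ _ _ _ _ _ (by ring) (by ring)
  rw [hA, hB, hC]

lemma img5 : g5.toIsometryEquiv '' pinwheelTriangle = T5 := by
  rw [pinwheelTriangle, image_hull]
  have hA : g5 !₂[0, 0] = !₂[s5, 0] := gA_vertex _ _ _ _ _ _ _ _ _ (by ring) (by ring)
  have hB : g5 !₂[2, 0] = !₂[s5/5, 2*s5/5] := gA_vertex _ _ _ _ _ _ _ _ _ (by ring) (by ring)
  have hC : g5 !₂[0, 1] = !₂[6*s5/5, 2*s5/5] := gA_vertex _ _ _ _ _ _ _ _ _ (by ring) (by ring)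
  rw [hA, hB, hC]

lemma imgB : (fun x : E2 => Real.sqrt 5 • x) '' pinwheelTriangle = TB := by
  rw [pinwheelTriangle, (IsLinearMap.isLinearMap_smul (Real.sqrt 5)).image_convexHull,
    Set.image_insert_eq, Set.image_insert_eq, Set.image_singleton]
  have hA : Real.sqrt 5 • (!₂[0, 0] : E2) = !₂[0, 0] := by
    ext i; fin_cases i <;> simp [PiLp.smul_apply, smul_eq_mul]
  have hB : Real.sqrt 5 • (!₂[2, 0] : E2) = !₂[2*s5, 0] := by
    ext i; fin_cases i <;> simp [PiLp.smul_apply, smul_eq_mul] <;> ring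
  have hC : Real.sqrt 5 • (!₂[0, 1] : E2) = !₂[0, s5] := by
    ext i; fin_cases i <;> simp [PiLp.smul_apply, smul_eq_mul]
  rw [hA, hB, hC]

end PW
namespace PW

lemma R1_sub {x : E2} (h1 : 0 ≤ x 0) (h2 : 2*x 0 - x 1 ≤ 0) (h3 : x 0 + 2*x 1 ≤ 2*s5) :
    x ∈ T1 := by
  refine mem_hull3 (u := s5/2 * x 0) (v := 1 - s5/2 * x 0 - s5/5 * (x 1 - 2*x 0))
    (w := s5/5 * (x 1 - 2*x 0)) ?_ ?_ ?_ (by ring) ?_ ?_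
  · nlinarith [mul_nonneg s5_pos.le h1]
  · nlinarith [mul_nonneg s5_pos.le (by linarith : (0:ℝ) ≤ 2*s5 - (x 0 + 2*x 1)), s5_sq]
  · nlinarith [mul_nonneg s5_pos.le (by linarith : (0:ℝ) ≤ x 1 - 2*x 0)]
  · simp only [PiLp.toLp_apply, Matrix.cons_val_zero, Matrix.cons_val_one, Matrix.head_cons]
    linear_combination (-(x 0)/5) * s5_sq
  · simp only [PiLp.toLp_apply, Matrix.cons_val_zero, Matrix.cons_val_one, Matrix.head_cons]
    linear_combination (-(x 1)/5) * s5_sq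

lemma R2_sub {x : E2} (h1 : 0 ≤ x 1) (h2 : 0 ≤ 2*x 0 - x 1) (h3 : x 0 + 2*x 1 ≤ s5) :
    x ∈ T2 := by
  refine mem_hull3 (u := s5/2 * x 1) (v := s5/5 * x 0 - s5/10 * x 1)
    (w := 1 - s5/2 * x 1 - (s5/5 * x 0 - s5/10 * x 1)) ?_ ?_ ?_ (by ring) ?_ ?_
  · nlinarith [mul_nonneg s5_pos.le h1]
  · nlinarith [mul_nonneg s5_pos.le h2]
  · nlinarith [mul_nonneg s5_pos.le (by linarith : (0:ℝ) ≤ s5 - (x 0 + 2*x 1)), s5_sq]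
  · simp only [PiLp.toLp_apply, Matrix.cons_val_zero, Matrix.cons_val_one, Matrix.head_cons]
    linear_combination (-(x 0)/5) * s5_sq
  · simp only [PiLp.toLp_apply, Matrix.cons_val_zero, Matrix.cons_val_one, Matrix.head_cons]
    linear_combination (-(x 1)/5) * s5_sq

lemma R3_sub {x : E2} (h1 : 0 ≤ x 1) (h2 : 2*s5 ≤ 2*x 0 - x 1) (h3 : x 0 + 2*x 1 ≤ 2*s5) :
    x ∈ T3 := by
  refine mem_hull3 (u := s5/2 * x 1) (v := s5/5 * x 0 - 1 - s5/10 * x 1)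
    (w := 1 - s5/2 * x 1 - (s5/5 * x 0 - 1 - s5/10 * x 1)) ?_ ?_ ?_ (by ring) ?_ ?_
  · nlinarith [mul_nonneg s5_pos.le h1]
  · nlinarith [mul_nonneg s5_pos.le (by linarith : (0:ℝ) ≤ (2*x 0 - x 1) - 2*s5), s5_sq]
  · nlinarith [mul_nonneg s5_pos.le (by linarith : (0:ℝ) ≤ 2*s5 - (x 0 + 2*x 1)), s5_sq]
  · simp only [PiLp.toLp_apply, Matrix.cons_val_zero, Matrix.cons_val_one, Matrix.head_cons]
    linear_combination (-(x 0)/5) * s5_sq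
  · simp only [PiLp.toLp_apply, Matrix.cons_val_zero, Matrix.cons_val_one, Matrix.head_cons]
    linear_combination (-(x 1)/5) * s5_sq

lemma R4_sub {x : E2} (h1 : 2*s5/5 ≤ x 1) (h2 : 0 ≤ 2*x 0 - x 1) (h3 : x 0 + 2*x 1 ≤ 2*s5) :
    x ∈ T4 := by
  refine mem_hull3 (u := s5/2 * x 1 - 1) (v := s5/5 * x 0 - s5/10 * x 1)
    (w := 1 - (s5/2 * x 1 - 1) - (s5/5 * x 0 - s5/10 * x 1)) ?_ ?_ ?_ (by ring) ?_ ?_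
  · nlinarith [mul_nonneg s5_pos.le (by linarith : (0:ℝ) ≤ x 1 - 2*s5/5), s5_sq]
  · nlinarith [mul_nonneg s5_pos.le h2]
  · nlinarith [mul_nonneg s5_pos.le (by linarith : (0:ℝ) ≤ 2*s5 - (x 0 + 2*x 1)), s5_sq]
  · simp only [PiLp.toLp_apply, Matrix.cons_val_zero, Matrix.cons_val_one, Matrix.head_cons]
    linear_combination (-(x 0)/5) * s5_sq
  · simp only [PiLp.toLp_apply, Matrix.cons_val_zero, Matrix.cons_val_one, Matrix.head_cons]
    linear_combination (-(x 1)/5) * s5_sq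

lemma R5_sub {x : E2} (h1 : x 1 ≤ 2*s5/5) (h2 : s5 ≤ x 0 + 2*x 1) (h3 : 2*x 0 - x 1 ≤ 2*s5) :
    x ∈ T5 := by
  refine mem_hull3 (u := 1 - s5/2 * x 1) (v := 1 + s5/10 * x 1 - s5/5 * x 0)
    (w := s5/5 * x 0 + 2*s5/5 * x 1 - 1) ?_ ?_ ?_ (by ring) ?_ ?_
  · nlinarith [mul_nonneg s5_pos.le (by linarith : (0:ℝ) ≤ 2*s5/5 - x 1), s5_sq]
  · nlinarith [mul_nonneg s5_pos.le (by linarith : (0:ℝ) ≤ 2*s5 - (2*x 0 - x 1)), s5_sq]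
  · nlinarith [mul_nonneg s5_pos.le (by linarith : (0:ℝ) ≤ (x 0 + 2*x 1) - s5), s5_sq]
  · simp only [PiLp.toLp_apply, Matrix.cons_val_zero, Matrix.cons_val_one, Matrix.head_cons]
    linear_combination (-(x 0)/5) * s5_sq
  · simp only [PiLp.toLp_apply, Matrix.cons_val_zero, Matrix.cons_val_one, Matrix.head_cons]
    linear_combination (-(x 1)/5) * s5_sq

-- memberships of tile vertices in the big triangle
lemma mP1 : (!₂[2*s5/5, 4*s5/5] : E2) ∈ TB := by
  refine mem_hull3 (u := 0) (v := 1/5) (w := 4/5) (by norm_num) (by norm_num) (by norm_num)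
    (by norm_num) ?_ ?_ <;>
    simp only [PiLp.toLp_apply, Matrix.cons_val_zero, Matrix.cons_val_one, Matrix.head_cons] <;> ring

lemma mP2 : (!₂[0, 0] : E2) ∈ TB := by
  refine mem_hull3 (u := 1) (v := 0) (w := 0) (by norm_num) (by norm_num) (by norm_num)
    (by norm_num) ?_ ?_ <;>
    simp only [PiLp.toLp_apply, Matrix.cons_val_zero, Matrix.cons_val_one, Matrix.head_cons] <;> ring

lemma mP3 : (!₂[0, s5] : E2) ∈ TB := by
  refine mem_hull3 (u := 0) (v := 0) (w := 1) (by norm_num) (by norm_num) (by norm_num)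
    (by norm_num) ?_ ?_ <;>
    simp only [PiLp.toLp_apply, Matrix.cons_val_zero, Matrix.cons_val_one, Matrix.head_cons] <;> ring

lemma mP4 : (!₂[s5/5, 2*s5/5] : E2) ∈ TB := by
  refine mem_hull3 (u := 1/2) (v := 1/10) (w := 2/5) (by norm_num) (by norm_num) (by norm_num)
    (by norm_num) ?_ ?_ <;>
    simp only [PiLp.toLp_apply, Matrix.cons_val_zero, Matrix.cons_val_one, Matrix.head_cons] <;> ring

lemma mP5 : (!₂[s5, 0] : E2) ∈ TB := by
  refine mem_hull3 (u := 1/2) (v := 1/2) (w := 0) (by norm_num) (by norm_num) (by norm_num)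
    (by norm_num) ?_ ?_ <;>
    simp only [PiLp.toLp_apply, Matrix.cons_val_zero, Matrix.cons_val_one, Matrix.head_cons] <;> ring

lemma mP6 : (!₂[6*s5/5, 2*s5/5] : E2) ∈ TB := by
  refine mem_hull3 (u := 0) (v := 3/5) (w := 2/5) (by norm_num) (by norm_num) (by norm_num)
    (by norm_num) ?_ ?_ <;>
    simp only [PiLp.toLp_apply, Matrix.cons_val_zero, Matrix.cons_val_one, Matrix.head_cons] <;> ring

lemma mP7 : (!₂[2*s5, 0] : E2) ∈ TB := by
  refine mem_hull3 (u := 0) (v := 1) (w := 0) (by norm_num) (by norm_num) (by norm_num)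
    (by norm_num) ?_ ?_ <;>
    simp only [PiLp.toLp_apply, Matrix.cons_val_zero, Matrix.cons_val_one, Matrix.head_cons] <;> ring

lemma sub1 : T1 ⊆ TB := hull3_subset_hull mP1 mP2 mP3
lemma sub2 : T2 ⊆ TB := hull3_subset_hull mP4 mP5 mP2
lemma sub3 : T3 ⊆ TB := hull3_subset_hull mP6 mP7 mP5
lemma sub4 : T4 ⊆ TB := hull3_subset_hull mP1 mP6 mP4
lemma sub5 : T5 ⊆ TB := hull3_subset_hull mP5 mP4 mP6

end PW
namespace PW

lemma d12 : interior T1 ∩ interior T2 = ∅ := by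
  apply disj_of_sep _ _ 2 (-1) 0 (by norm_num)
  · exact hull3_subset_le
      (by simp only [PiLp.toLp_apply, Matrix.cons_val_zero, Matrix.cons_val_one, Matrix.head_cons]; nlinarith [s5_pos])
      (by simp only [PiLp.toLp_apply, Matrix.cons_val_zero, Matrix.cons_val_one, Matrix.head_cons]; nlinarith [s5_pos])
      (by simp only [PiLp.toLp_apply, Matrix.cons_val_zero, Matrix.cons_val_one, Matrix.head_cons]; nlinarith [s5_pos])
  · exact hull3_subset_le
      (by simp only [PiLp.toLp_apply, Matrix.cons_val_zero, Matrix.cons_val_one, Matrix.head_cons]; nlinarith [s5_pos])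
      (by simp only [PiLp.toLp_apply, Matrix.cons_val_zero, Matrix.cons_val_one, Matrix.head_cons]; nlinarith [s5_pos])
      (by simp only [PiLp.toLp_apply, Matrix.cons_val_zero, Matrix.cons_val_one, Matrix.head_cons]; nlinarith [s5_pos])

lemma d13 : interior T1 ∩ interior T3 = ∅ := by
  apply disj_of_sep _ _ 2 (-1) 0 (by norm_num)
  · exact hull3_subset_le
      (by simp only [PiLp.toLp_apply, Matrix.cons_val_zero, Matrix.cons_val_one, Matrix.head_cons]; nlinarith [s5_pos])
      (by simp only [PiLp.toLp_apply, Matrix.cons_val_zero, Matrix.cons_val_one, Matrix.head_cons]; nlinarith [s5_pos])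
      (by simp only [PiLp.toLp_apply, Matrix.cons_val_zero, Matrix.cons_val_one, Matrix.head_cons]; nlinarith [s5_pos])
  · exact hull3_subset_le
      (by simp only [PiLp.toLp_apply, Matrix.cons_val_zero, Matrix.cons_val_one, Matrix.head_cons]; nlinarith [s5_pos])
      (by simp only [PiLp.toLp_apply, Matrix.cons_val_zero, Matrix.cons_val_one, Matrix.head_cons]; nlinarith [s5_pos])
      (by simp only [PiLp.toLp_apply, Matrix.cons_val_zero, Matrix.cons_val_one, Matrix.head_cons]; nlinarith [s5_pos])

lemma d14 : interior T1 ∩ interior T4 = ∅ := by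
  apply disj_of_sep _ _ 2 (-1) 0 (by norm_num)
  · exact hull3_subset_le
      (by simp only [PiLp.toLp_apply, Matrix.cons_val_zero, Matrix.cons_val_one, Matrix.head_cons]; nlinarith [s5_pos])
      (by simp only [PiLp.toLp_apply, Matrix.cons_val_zero, Matrix.cons_val_one, Matrix.head_cons]; nlinarith [s5_pos])
      (by simp only [PiLp.toLp_apply, Matrix.cons_val_zero, Matrix.cons_val_one, Matrix.head_cons]; nlinarith [s5_pos])
  · exact hull3_subset_le
      (by simp only [PiLp.toLp_apply, Matrix.cons_val_zero, Matrix.cons_val_one, Matrix.head_cons]; nlinarith [s5_pos])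
      (by simp only [PiLp.toLp_apply, Matrix.cons_val_zero, Matrix.cons_val_one, Matrix.head_cons]; nlinarith [s5_pos])
      (by simp only [PiLp.toLp_apply, Matrix.cons_val_zero, Matrix.cons_val_one, Matrix.head_cons]; nlinarith [s5_pos])

lemma d15 : interior T1 ∩ interior T5 = ∅ := by
  apply disj_of_sep _ _ 2 (-1) 0 (by norm_num)
  · exact hull3_subset_le
      (by simp only [PiLp.toLp_apply, Matrix.cons_val_zero, Matrix.cons_val_one, Matrix.head_cons]; nlinarith [s5_pos])
      (by simp only [PiLp.toLp_apply, Matrix.cons_val_zero, Matrix.cons_val_one, Matrix.head_cons]; nlinarith [s5_pos])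
      (by simp only [PiLp.toLp_apply, Matrix.cons_val_zero, Matrix.cons_val_one, Matrix.head_cons]; nlinarith [s5_pos])
  · exact hull3_subset_le
      (by simp only [PiLp.toLp_apply, Matrix.cons_val_zero, Matrix.cons_val_one, Matrix.head_cons]; nlinarith [s5_pos])
      (by simp only [PiLp.toLp_apply, Matrix.cons_val_zero, Matrix.cons_val_one, Matrix.head_cons]; nlinarith [s5_pos])
      (by simp only [PiLp.toLp_apply, Matrix.cons_val_zero, Matrix.cons_val_one, Matrix.head_cons]; nlinarith [s5_pos])

lemma d23 : interior T2 ∩ interior T3 = ∅ := by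
  apply disj_of_sep _ _ 2 (-1) (2*s5) (by norm_num)
  · exact hull3_subset_le
      (by simp only [PiLp.toLp_apply, Matrix.cons_val_zero, Matrix.cons_val_one, Matrix.head_cons]; nlinarith [s5_pos])
      (by simp only [PiLp.toLp_apply, Matrix.cons_val_zero, Matrix.cons_val_one, Matrix.head_cons]; nlinarith [s5_pos])
      (by simp only [PiLp.toLp_apply, Matrix.cons_val_zero, Matrix.cons_val_one, Matrix.head_cons]; nlinarith [s5_pos])
  · exact hull3_subset_le
      (by simp only [PiLp.toLp_apply, Matrix.cons_val_zero, Matrix.cons_val_one, Matrix.head_cons]; nlinarith [s5_pos])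
      (by simp only [PiLp.toLp_apply, Matrix.cons_val_zero, Matrix.cons_val_one, Matrix.head_cons]; nlinarith [s5_pos])
      (by simp only [PiLp.toLp_apply, Matrix.cons_val_zero, Matrix.cons_val_one, Matrix.head_cons]; nlinarith [s5_pos])

lemma d24 : interior T2 ∩ interior T4 = ∅ := by
  apply disj_of_sep _ _ 0 1 (2*s5/5) (by norm_num)
  · exact hull3_subset_le
      (by simp only [PiLp.toLp_apply, Matrix.cons_val_zero, Matrix.cons_val_one, Matrix.head_cons]; nlinarith [s5_pos])
      (by simp only [PiLp.toLp_apply, Matrix.cons_val_zero, Matrix.cons_val_one, Matrix.head_cons]; nlinarith [s5_pos])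
      (by simp only [PiLp.toLp_apply, Matrix.cons_val_zero, Matrix.cons_val_one, Matrix.head_cons]; nlinarith [s5_pos])
  · exact hull3_subset_le
      (by simp only [PiLp.toLp_apply, Matrix.cons_val_zero, Matrix.cons_val_one, Matrix.head_cons]; nlinarith [s5_pos])
      (by simp only [PiLp.toLp_apply, Matrix.cons_val_zero, Matrix.cons_val_one, Matrix.head_cons]; nlinarith [s5_pos])
      (by simp only [PiLp.toLp_apply, Matrix.cons_val_zero, Matrix.cons_val_one, Matrix.head_cons]; nlinarith [s5_pos])

lemma d25 : interior T2 ∩ interior T5 = ∅ := by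
  apply disj_of_sep _ _ 1 2 s5 (by norm_num)
  · exact hull3_subset_le
      (by simp only [PiLp.toLp_apply, Matrix.cons_val_zero, Matrix.cons_val_one, Matrix.head_cons]; nlinarith [s5_pos])
      (by simp only [PiLp.toLp_apply, Matrix.cons_val_zero, Matrix.cons_val_one, Matrix.head_cons]; nlinarith [s5_pos])
      (by simp only [PiLp.toLp_apply, Matrix.cons_val_zero, Matrix.cons_val_one, Matrix.head_cons]; nlinarith [s5_pos])
  · exact hull3_subset_le
      (by simp only [PiLp.toLp_apply, Matrix.cons_val_zero, Matrix.cons_val_one, Matrix.head_cons]; nlinarith [s5_pos])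
      (by simp only [PiLp.toLp_apply, Matrix.cons_val_zero, Matrix.cons_val_one, Matrix.head_cons]; nlinarith [s5_pos])
      (by simp only [PiLp.toLp_apply, Matrix.cons_val_zero, Matrix.cons_val_one, Matrix.head_cons]; nlinarith [s5_pos])

lemma d34 : interior T3 ∩ interior T4 = ∅ := by
  apply disj_of_sep _ _ (-2) 1 (-(2*s5)) (by norm_num)
  · exact hull3_subset_le
      (by simp only [PiLp.toLp_apply, Matrix.cons_val_zero, Matrix.cons_val_one, Matrix.head_cons]; nlinarith [s5_pos])
      (by simp only [PiLp.toLp_apply, Matrix.cons_val_zero, Matrix.cons_val_one, Matrix.head_cons]; nlinarith [s5_pos])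
      (by simp only [PiLp.toLp_apply, Matrix.cons_val_zero, Matrix.cons_val_one, Matrix.head_cons]; nlinarith [s5_pos])
  · exact hull3_subset_le
      (by simp only [PiLp.toLp_apply, Matrix.cons_val_zero, Matrix.cons_val_one, Matrix.head_cons]; nlinarith [s5_pos])
      (by simp only [PiLp.toLp_apply, Matrix.cons_val_zero, Matrix.cons_val_one, Matrix.head_cons]; nlinarith [s5_pos])
      (by simp only [PiLp.toLp_apply, Matrix.cons_val_zero, Matrix.cons_val_one, Matrix.head_cons]; nlinarith [s5_pos])

lemma d35 : interior T3 ∩ interior T5 = ∅ := by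
  apply disj_of_sep _ _ (-2) 1 (-(2*s5)) (by norm_num)
  · exact hull3_subset_le
      (by simp only [PiLp.toLp_apply, Matrix.cons_val_zero, Matrix.cons_val_one, Matrix.head_cons]; nlinarith [s5_pos])
      (by simp only [PiLp.toLp_apply, Matrix.cons_val_zero, Matrix.cons_val_one, Matrix.head_cons]; nlinarith [s5_pos])
      (by simp only [PiLp.toLp_apply, Matrix.cons_val_zero, Matrix.cons_val_one, Matrix.head_cons]; nlinarith [s5_pos])
  · exact hull3_subset_le
      (by simp only [PiLp.toLp_apply, Matrix.cons_val_zero, Matrix.cons_val_one, Matrix.head_cons]; nlinarith [s5_pos])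
      (by simp only [PiLp.toLp_apply, Matrix.cons_val_zero, Matrix.cons_val_one, Matrix.head_cons]; nlinarith [s5_pos])
      (by simp only [PiLp.toLp_apply, Matrix.cons_val_zero, Matrix.cons_val_one, Matrix.head_cons]; nlinarith [s5_pos])

lemma d45 : interior T4 ∩ interior T5 = ∅ := by
  apply disj_of_sep _ _ 0 (-1) (-(2*s5/5)) (by norm_num)
  · exact hull3_subset_le
      (by simp only [PiLp.toLp_apply, Matrix.cons_val_zero, Matrix.cons_val_one, Matrix.head_cons]; nlinarith [s5_pos])
      (by simp only [PiLp.toLp_apply, Matrix.cons_val_zero, Matrix.cons_val_one, Matrix.head_cons]; nlinarith [s5_pos])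
      (by simp only [PiLp.toLp_apply, Matrix.cons_val_zero, Matrix.cons_val_one, Matrix.head_cons]; nlinarith [s5_pos])
  · exact hull3_subset_le
      (by simp only [PiLp.toLp_apply, Matrix.cons_val_zero, Matrix.cons_val_one, Matrix.head_cons]; nlinarith [s5_pos])
      (by simp only [PiLp.toLp_apply, Matrix.cons_val_zero, Matrix.cons_val_one, Matrix.head_cons]; nlinarith [s5_pos])
      (by simp only [PiLp.toLp_apply, Matrix.cons_val_zero, Matrix.cons_val_one, Matrix.head_cons]; nlinarith [s5_pos])

end PW

open PW

/-- There are five isometries of the Euclidean plane whose images of the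
(1,2,√5) right triangle have pairwise disjoint interiors and together tile the
√5-fold inflation of the triangle. -/
theorem pinwheel_substitution :
    ∃ g : Fin 5 → (EuclideanSpace ℝ (Fin 2) ≃ᵢ EuclideanSpace ℝ (Fin 2)),
      (∀ i j : Fin 5, i ≠ j →
        interior (g i '' pinwheelTriangle) ∩ interior (g j '' pinwheelTriangle) = ∅) ∧
      (⋃ i : Fin 5, g i '' pinwheelTriangle) =
        (fun x => Real.sqrt 5 • x) '' pinwheelTriangle := by
  refine ⟨!₂[g1.toIsometryEquiv, g2.toIsometryEquiv, g3.toIsometryEquiv,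
    g4.toIsometryEquiv, g5.toIsometryEquiv], ?_, ?_⟩
  · intro i j hij
    have comm : ∀ {S1 S2 : Set E2},
        interior S1 ∩ interior S2 = ∅ → interior S2 ∩ interior S1 = ∅ := by
      intro S1 S2 h; rwa [Set.inter_comm]
    have e12 : interior (g1.toIsometryEquiv '' pinwheelTriangle) ∩
        interior (g2.toIsometryEquiv '' pinwheelTriangle) = ∅ := by rw [img1, img2]; exact d12
    have e13 : interior (g1.toIsometryEquiv '' pinwheelTriangle) ∩
        interior (g3.toIsometryEquiv '' pinwheelTriangle) = ∅ := by rw [img1, img3]; exact d13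
    have e14 : interior (g1.toIsometryEquiv '' pinwheelTriangle) ∩
        interior (g4.toIsometryEquiv '' pinwheelTriangle) = ∅ := by rw [img1, img4]; exact d14
    have e15 : interior (g1.toIsometryEquiv '' pinwheelTriangle) ∩
        interior (g5.toIsometryEquiv '' pinwheelTriangle) = ∅ := by rw [img1, img5]; exact d15
    have e23 : interior (g2.toIsometryEquiv '' pinwheelTriangle) ∩
        interior (g3.toIsometryEquiv '' pinwheelTriangle) = ∅ := by rw [img2, img3]; exact d23
    have e24 : interior (g2.toIsometryEquiv '' pinwheelTriangle) ∩
        interior (g4.toIsometryEquiv '' pinwheelTriangle) = ∅ := by rw [img2, img4]; exact d24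
    have e25 : interior (g2.toIsometryEquiv '' pinwheelTriangle) ∩
        interior (g5.toIsometryEquiv '' pinwheelTriangle) = ∅ := by rw [img2, img5]; exact d25
    have e34 : interior (g3.toIsometryEquiv '' pinwheelTriangle) ∩
        interior (g4.toIsometryEquiv '' pinwheelTriangle) = ∅ := by rw [img3, img4]; exact d34
    have e35 : interior (g3.toIsometryEquiv '' pinwheelTriangle) ∩
        interior (g5.toIsometryEquiv '' pinwheelTriangle) = ∅ := by rw [img3, img5]; exact d35
    have e45 : interior (g4.toIsometryEquiv '' pinwheelTriangle) ∩
        interior (g5.toIsometryEquiv '' pinwheelTriangle) = ∅ := by rw [img4, img5]; exact d45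
    fin_cases i <;> fin_cases j
    · exact absurd rfl hij
    · exact e12
    · exact e13
    · exact e14
    · exact e15
    · exact comm e12
    · exact absurd rfl hij
    · exact e23
    · exact e24
    · exact e25
    · exact comm e13
    · exact comm e23
    · exact absurd rfl hij
    · exact e34
    · exact e35
    · exact comm e14
    · exact comm e24
    · exact comm e34
    · exact absurd rfl hij
    · exact e45
    · exact comm e15
    · exact comm e25
    · exact comm e35
    · exact comm e45
    · exact absurd rfl hij
  · rw [union5]
    show g1.toIsometryEquiv '' pinwheelTriangle ∪ g2.toIsometryEquiv '' pinwheelTriangle ∪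
      g3.toIsometryEquiv '' pinwheelTriangle ∪ g4.toIsometryEquiv '' pinwheelTriangle ∪
      g5.toIsometryEquiv '' pinwheelTriangle = (fun x => Real.sqrt 5 • x) '' pinwheelTriangle
    rw [img1, img2, img3, img4, img5, imgB]
    apply subset_antisymm
    · exact Set.union_subset (Set.union_subset (Set.union_subset
        (Set.union_subset sub1 sub2) sub3) sub4) sub5
    · intro x hx
      have k0 : 0 ≤ x 0 := by
        have h := hull3_subset_le (p := -1) (q := 0) (r := 0)
          (by simp only [PiLp.toLp_apply, Matrix.cons_val_zero, Matrix.cons_val_one, Matrix.head_cons]; nlinarith [s5_pos])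
          (by simp only [PiLp.toLp_apply, Matrix.cons_val_zero, Matrix.cons_val_one, Matrix.head_cons]; nlinarith [s5_pos])
          (by simp only [PiLp.toLp_apply, Matrix.cons_val_zero, Matrix.cons_val_one, Matrix.head_cons]; nlinarith [s5_pos]) hx
        simp only [Set.mem_setOf_eq] at h; linarith
      have k1 : 0 ≤ x 1 := by
        have h := hull3_subset_le (p := 0) (q := -1) (r := 0)
          (by simp only [PiLp.toLp_apply, Matrix.cons_val_zero, Matrix.cons_val_one, Matrix.head_cons]; nlinarith [s5_pos])
          (by simp only [PiLp.toLp_apply, Matrix.cons_val_zero, Matrix.cons_val_one, Matrix.head_cons]; nlinarith [s5_pos])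
          (by simp only [PiLp.toLp_apply, Matrix.cons_val_zero, Matrix.cons_val_one, Matrix.head_cons]; nlinarith [s5_pos]) hx
        simp only [Set.mem_setOf_eq] at h; linarith
      have k2 : x 0 + 2*x 1 ≤ 2*s5 := by
        have h := hull3_subset_le (p := 1) (q := 2) (r := 2*s5)
          (by simp only [PiLp.toLp_apply, Matrix.cons_val_zero, Matrix.cons_val_one, Matrix.head_cons]; nlinarith [s5_pos])
          (by simp only [PiLp.toLp_apply, Matrix.cons_val_zero, Matrix.cons_val_one, Matrix.head_cons]; nlinarith [s5_pos])
          (by simp only [PiLp.toLp_apply, Matrix.cons_val_zero, Matrix.cons_val_one, Matrix.head_cons]; nlinarith [s5_pos]) hx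
        simp only [Set.mem_setOf_eq] at h; linarith
      by_cases c1 : 2*x 0 - x 1 ≤ 0
      · exact Or.inl (Or.inl (Or.inl (Or.inl (R1_sub k0 c1 k2))))
      · push_neg at c1
        by_cases c2 : 2*s5 ≤ 2*x 0 - x 1
        · exact Or.inl (Or.inl (Or.inr (R3_sub k1 c2 k2)))
        · push_neg at c2
          by_cases c3 : 2*s5/5 ≤ x 1
          · exact Or.inl (Or.inr (R4_sub c3 c1.le k2))
          · push_neg at c3
            by_cases c4 : x 0 + 2*x 1 ≤ s5
            · exact Or.inl (Or.inl (Or.inl (Or.inr (R2_sub k1 c1.le c4))))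
            · push_neg at c4
              exact Or.inr (R5_sub c3.le c4.le c2.le)
end
end

section
/- Let γ = (1+√5)/2 and let T ⊂ ℝ² be the golden triangle with vertices O = (0,0), B = (γ,0) and C = γ·(cos(π/5), sin(π/5)): an isoceles triangle with apex angle π/5 at O, legs of length γ, and base of length 1. Let P = (cos(π/5), sin(π/5)), the point of the segment OC at distance 1 from O. Then T is the union of the triangle T₁ with vertices B, C, P and the triangle T₂ with vertices O, B, P, these two triangles have disjoint interiors, T₁ is isoceles with |BP| = |BC| = 1 and apex angle π/5 at B (a golden triangle with legs 1), and T₂ is isoceles with |PO| = |PB| = 1 and apex angle 3π/5 at P (a golden gnomon with legs 1). -/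
open Real Set


lemma gseg_union {E : Type*} [AddCommGroup E] [Module ℝ E] {x y z : E}
    (hy : y ∈ segment ℝ x z) : segment ℝ x z = segment ℝ x y ∪ segment ℝ y z := by
  obtain ⟨a, b, ha, hb, hab, hyeq⟩ := hy
  refine Subset.antisymm ?_ (union_subset
    ((convex_segment x z).segment_subset (left_mem_segment ℝ x z) ⟨a, b, ha, hb, hab, hyeq⟩)
    ((convex_segment x z).segment_subset ⟨a, b, ha, hb, hab, hyeq⟩ (right_mem_segment ℝ x z)))
  rintro p ⟨u, v, hu, hv, huv, rfl⟩
  rcases le_total v b with hvb | hbv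
  · rcases eq_or_lt_of_le hb with hb0 | hb0
    · left
      have hv0 : v = 0 := le_antisymm (hvb.trans_eq hb0.symm) hv
      have hu1 : u = 1 := by linarith
      rw [hv0, hu1, zero_smul, one_smul, add_zero]
      exact left_mem_segment ℝ x y
    · left
      have hbne : b ≠ 0 := ne_of_gt hb0
      refine ⟨(b - v) / b, v / b, div_nonneg (by linarith) hb0.le, by positivity,
        by field_simp; ring, ?_⟩
      rw [← hyeq]
      match_scalars
      · field_simp
        linear_combination v * hab - b * huv
      · field_simp
  · rcases eq_or_lt_of_le ha with ha0 | ha0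
    · right
      have hb1 : b = 1 := by linarith
      have hyz : y = z := by rw [← hyeq, ← ha0, hb1, zero_smul, one_smul, zero_add]
      have hv1 : v = 1 := le_antisymm (by linarith) (hb1 ▸ hbv)
      have hu0 : u = 0 := by linarith
      rw [hv1, hu0, zero_smul, one_smul, zero_add]
      exact right_mem_segment ℝ y z
    · right
      have hane : a ≠ 0 := ne_of_gt ha0
      refine ⟨u / a, (v - b) / a, by positivity, div_nonneg (by linarith) ha0.le,
        by field_simp; linarith, ?_⟩
      rw [← hyeq]
      match_scalars
      · field_simp
      · field_simp
        linear_combination (-v) * hab + b * huv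

noncomputable def gOpt : EuclideanSpace ℝ (Fin 2) := !₂[0, 0]
noncomputable def gBpt : EuclideanSpace ℝ (Fin 2) := !₂[(1 + Real.sqrt 5) / 2, 0]
noncomputable def gPpt : EuclideanSpace ℝ (Fin 2) := !₂[Real.cos (π / 5), Real.sin (π / 5)]
noncomputable def gCpt : EuclideanSpace ℝ (Fin 2) := ((1 + Real.sqrt 5) / 2) • gPpt

@[simp] lemma gOpt0 : gOpt 0 = 0 := rfl
@[simp] lemma gOpt1 : gOpt 1 = 0 := rfl
@[simp] lemma gBpt0 : gBpt 0 = (1 + Real.sqrt 5) / 2 := rfl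
@[simp] lemma gBpt1 : gBpt 1 = 0 := rfl
@[simp] lemma gPpt0 : gPpt 0 = Real.cos (π / 5) := rfl
@[simp] lemma gPpt1 : gPpt 1 = Real.sin (π / 5) := rfl
@[simp] lemma gCpt0 : gCpt 0 = (1 + Real.sqrt 5) / 2 * Real.cos (π / 5) := rfl
@[simp] lemma gCpt1 : gCpt 1 = (1 + Real.sqrt 5) / 2 * Real.sin (π / 5) := rfl

lemma ginner (x y : EuclideanSpace ℝ (Fin 2)) :
    (inner ℝ x y : ℝ) = x 0 * y 0 + x 1 * y 1 := by
  simp [PiLp.inner_apply, Fin.sum_univ_two, mul_comm]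

lemma gr2 : Real.sqrt 5 ^ 2 = 5 := Real.sq_sqrt (by norm_num)
lemma gr0 : (0:ℝ) ≤ Real.sqrt 5 := Real.sqrt_nonneg 5
lemma grgt2 : (2:ℝ) < Real.sqrt 5 := by nlinarith [gr2, gr0]
lemma gs_pos : 0 < Real.sin (π / 5) :=
  Real.sin_pos_of_pos_of_lt_pi (by positivity) (by linarith [Real.pi_pos])
lemma gc_val : Real.cos (π / 5) = (1 + Real.sqrt 5) / 4 := Real.cos_pi_div_five
lemma gs_sq : Real.sin (π / 5) ^ 2 = 1 - ((1 + Real.sqrt 5) / 4) ^ 2 := by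
  rw [← gc_val]
  nlinarith [Real.sin_sq_add_cos_sq (π / 5)]
lemma gγ_pos : (0:ℝ) < (1 + Real.sqrt 5) / 2 := by nlinarith [grgt2]
lemma gγ_gt1 : (1:ℝ) < (1 + Real.sqrt 5) / 2 := by nlinarith [grgt2]

-- angle unfolding
lemma gangle (x y z : EuclideanSpace ℝ (Fin 2)) :
    EuclideanGeometry.angle x y z
      = Real.arccos (((x 0 - y 0) * (z 0 - y 0) + (x 1 - y 1) * (z 1 - y 1))
          / (dist x y * dist z y)) := by
  have h1 : EuclideanGeometry.angle x y z
      = Real.arccos ((inner ℝ (x - y) (z - y) : ℝ) / (‖x - y‖ * ‖z - y‖)) := rfl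
  have e0 : (x - y) 0 = x 0 - y 0 := rfl
  have e0' : (z - y) 0 = z 0 - y 0 := rfl
  have e1 : (x - y) 1 = x 1 - y 1 := rfl
  have e1' : (z - y) 1 = z 1 - y 1 := rfl
  rw [h1, ginner, e0, e0', e1, e1', ← dist_eq_norm, ← dist_eq_norm]

-- need dist lemmas here for angle computations (copied from aux.lean)
lemma gdist2 (x y : EuclideanSpace ℝ (Fin 2)) :
    dist x y = Real.sqrt ((x 0 - y 0)^2 + (x 1 - y 1)^2) := by
  rw [EuclideanSpace.dist_eq]
  simp [Fin.sum_univ_two, Real.dist_eq, sq_abs]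

lemma gdist_OB : dist gOpt gBpt = (1 + Real.sqrt 5) / 2 := by
  rw [gdist2]
  simp only [gOpt0, gOpt1, gBpt0, gBpt1]
  rw [show (0 - (1 + Real.sqrt 5) / 2)^2 + (0 - 0 : ℝ)^2 = ((1 + Real.sqrt 5) / 2)^2 by ring]
  exact Real.sqrt_sq gγ_pos.le

lemma gdist_OP : dist gOpt gPpt = 1 := by
  rw [gdist2]
  simp only [gOpt0, gOpt1, gPpt0, gPpt1]
  rw [show (0 - Real.cos (π/5))^2 + (0 - Real.sin (π/5))^2 = 1 by
    nlinarith [Real.sin_sq_add_cos_sq (π / 5)]]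
  exact Real.sqrt_one

lemma gdist_OC : dist gOpt gCpt = (1 + Real.sqrt 5) / 2 := by
  rw [gdist2]
  simp only [gOpt0, gOpt1, gCpt0, gCpt1]
  rw [show (0 - (1 + Real.sqrt 5) / 2 * Real.cos (π/5))^2
      + (0 - (1 + Real.sqrt 5) / 2 * Real.sin (π/5))^2 = ((1 + Real.sqrt 5) / 2)^2 by
    nlinarith [Real.sin_sq_add_cos_sq (π / 5), gγ_pos]]
  exact Real.sqrt_sq gγ_pos.le

lemma gdist_BC : dist gBpt gCpt = 1 := by
  rw [gdist2]
  simp only [gBpt0, gBpt1, gCpt0, gCpt1]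
  rw [gc_val]
  rw [show ((1 + Real.sqrt 5) / 2 - (1 + Real.sqrt 5) / 2 * ((1 + Real.sqrt 5) / 4))^2
      + (0 - (1 + Real.sqrt 5) / 2 * Real.sin (π/5))^2 = 1 by
    linear_combination ((1 + Real.sqrt 5)/2)^2 * gs_sq + ((1 - Real.sqrt 5)/8) * gr2]
  exact Real.sqrt_one

lemma gdist_BP : dist gBpt gPpt = 1 := by
  rw [gdist2]
  simp only [gBpt0, gBpt1, gPpt0, gPpt1]
  rw [gc_val]
  rw [show ((1 + Real.sqrt 5) / 2 - (1 + Real.sqrt 5) / 4)^2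
      + (0 - Real.sin (π/5))^2 = 1 by
    linear_combination gs_sq]
  exact Real.sqrt_one

lemma gpi5_mem : 0 ≤ π / 5 ∧ π / 5 ≤ π :=
  ⟨by positivity, by linarith [Real.pi_pos]⟩

lemma gang_BOC : EuclideanGeometry.angle gBpt gOpt gCpt = π / 5 := by
  rw [gangle, dist_comm gBpt gOpt, dist_comm gCpt gOpt, gdist_OB, gdist_OC]
  simp only [gOpt0, gOpt1, gBpt0, gBpt1, gCpt0, gCpt1]
  rw [show (((1 + Real.sqrt 5) / 2 - 0) * ((1 + Real.sqrt 5) / 2 * Real.cos (π/5) - 0)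
      + (0 - 0) * ((1 + Real.sqrt 5) / 2 * Real.sin (π/5) - 0))
      / ((1 + Real.sqrt 5) / 2 * ((1 + Real.sqrt 5) / 2)) = Real.cos (π/5) by
    have h := gγ_pos.ne'
    field_simp
    ring]
  exact Real.arccos_cos gpi5_mem.1 gpi5_mem.2

lemma gang_PBC : EuclideanGeometry.angle gPpt gBpt gCpt = π / 5 := by
  rw [gangle, dist_comm gPpt gBpt, gdist_BP, dist_comm gCpt gBpt, gdist_BC]
  simp only [gOpt0, gOpt1, gBpt0, gBpt1, gCpt0, gCpt1, gPpt0, gPpt1]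
  rw [show ((Real.cos (π/5) - (1 + Real.sqrt 5)/2) * ((1 + Real.sqrt 5)/2 * Real.cos (π/5) - (1 + Real.sqrt 5)/2)
      + (Real.sin (π/5) - 0) * ((1 + Real.sqrt 5)/2 * Real.sin (π/5) - 0)) / (1 * 1) = Real.cos (π/5) by
    rw [show (1:ℝ) * 1 = 1 by norm_num, div_one, gc_val]
    linear_combination ((1 + Real.sqrt 5)/2) * gs_sq - ((1 + Real.sqrt 5)/16) * gr2]
  exact Real.arccos_cos gpi5_mem.1 gpi5_mem.2

lemma gcos35 : Real.cos (3 * π / 5) = (1 - Real.sqrt 5) / 4 := by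
  have h : (3:ℝ) * π / 5 = π - 2 * (π / 5) := by ring
  rw [h, Real.cos_pi_sub, Real.cos_two_mul, gc_val]
  linear_combination (-1/8) * gr2

lemma gang_OPB : EuclideanGeometry.angle gOpt gPpt gBpt = 3 * π / 5 := by
  rw [gangle, gdist_OP, gdist_BP]
  simp only [gOpt0, gOpt1, gBpt0, gBpt1, gPpt0, gPpt1]
  rw [show ((0 - Real.cos (π/5)) * ((1 + Real.sqrt 5)/2 - Real.cos (π/5))
      + (0 - Real.sin (π/5)) * (0 - Real.sin (π/5))) / (1 * 1) = (1 - Real.sqrt 5) / 4 by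
    rw [show (1:ℝ) * 1 = 1 by norm_num, div_one, gc_val]
    linear_combination gs_sq + (-1/8) * gr2]
  rw [← gcos35]
  exact Real.arccos_cos (by positivity) (by linarith [Real.pi_pos])

lemma gO_eq_zero : gOpt = 0 := by
  ext i; fin_cases i <;> rfl

lemma gPseg : gPpt ∈ segment ℝ gOpt gCpt := by
  refine ⟨1 - ((1 + Real.sqrt 5) / 2)⁻¹, ((1 + Real.sqrt 5) / 2)⁻¹, ?_, ?_, by ring, ?_⟩
  · rw [sub_nonneg]
    exact inv_le_one_of_one_le₀ gγ_gt1.le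
  · positivity
  · rw [gO_eq_zero, smul_zero, zero_add]
    simp only [gCpt]
    rw [smul_smul, inv_mul_cancel₀ gγ_pos.ne', one_smul]

lemma gconvex_le (p q a : ℝ) :
    Convex ℝ {x : EuclideanSpace ℝ (Fin 2) | p * x 0 + q * x 1 ≤ a} := by
  intro u hu v hv b c hb hc hbc
  simp only [Set.mem_setOf_eq] at *
  have e0 : (b • u + c • v) 0 = b * u 0 + c * v 0 := rfl
  have e1 : (b • u + c • v) 1 = b * u 1 + c * v 1 := rfl
  rw [e0, e1]
  have hba : b * a + c * a = a := by rw [← add_mul, hbc, one_mul]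
  nlinarith [mul_le_mul_of_nonneg_left hu hb, mul_le_mul_of_nonneg_left hv hc]

lemma gconvex_ge (p q a : ℝ) :
    Convex ℝ {x : EuclideanSpace ℝ (Fin 2) | a ≤ p * x 0 + q * x 1} := by
  intro u hu v hv b c hb hc hbc
  simp only [Set.mem_setOf_eq] at *
  have e0 : (b • u + c • v) 0 = b * u 0 + c * v 0 := rfl
  have e1 : (b • u + c • v) 1 = b * u 1 + c * v 1 := rfl
  rw [e0, e1]
  have hba : b * a + c * a = a := by rw [← add_mul, hbc, one_mul]
  nlinarith [mul_le_mul_of_nonneg_left hu hb, mul_le_mul_of_nonneg_left hv hc]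

lemma gplane_empty (p q a : ℝ) (hp : 0 < p) :
    interior {x : EuclideanSpace ℝ (Fin 2) | p * x 0 + q * x 1 = a} = ∅ := by
  rw [Set.eq_empty_iff_forall_notMem]
  intro x hx
  rw [mem_interior_iff_mem_nhds, Metric.mem_nhds_iff] at hx
  obtain ⟨ε, hε, hball⟩ := hx
  have h1 : p * x 0 + q * x 1 = a := hball (Metric.mem_ball_self hε)
  have hy : x + (ε/2) • EuclideanSpace.single (0 : Fin 2) (1:ℝ) ∈ Metric.ball x ε := by
    rw [Metric.mem_ball, dist_eq_norm, add_sub_cancel_left, norm_smul,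
      EuclideanSpace.norm_single, norm_one, mul_one, Real.norm_eq_abs,
      abs_of_pos (half_pos hε)]
    linarith
  have h2 := hball hy
  simp only [Set.mem_setOf_eq, PiLp.add_apply, PiLp.smul_apply,
    EuclideanSpace.single_apply, smul_eq_mul] at h2
  norm_num at h2
  nlinarith [mul_pos hp hε]

lemma gunion : convexHull ℝ {gOpt, gBpt, gCpt}
    = convexHull ℝ {gBpt, gCpt, gPpt} ∪ convexHull ℝ {gOpt, gBpt, gPpt} := by
  rw [Set.insert_comm gOpt gBpt {gCpt}]
  rw [← convexJoin_singleton_segment]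
  rw [gseg_union gPseg, convexJoin_union_right]
  rw [convexJoin_singleton_segment, convexJoin_singleton_segment]
  rw [Set.insert_comm gBpt gOpt {gPpt}]
  rw [Set.pair_comm gPpt gCpt]
  exact Set.union_comm _ _

lemma ghalf_T1 : convexHull ℝ {gBpt, gCpt, gPpt}
    ⊆ {x : EuclideanSpace ℝ (Fin 2) |
        Real.sin (π/5) * ((1 + Real.sqrt 5) / 2) ≤ Real.sin (π/5) * x 0 + Real.cos (π/5) * x 1} := by
  apply convexHull_min ?_ (gconvex_ge _ _ _)
  rw [Set.insert_subset_iff, Set.insert_subset_iff, Set.singleton_subset_iff]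
  refine ⟨?_, ?_, ?_⟩ <;> simp only [Set.mem_setOf_eq, gBpt0, gBpt1, gCpt0, gCpt1, gPpt0, gPpt1]
  · rw [mul_zero, add_zero]
  · rw [gc_val]
    nlinarith [gs_pos, grgt2, mul_pos gs_pos gγ_pos, gr2]
  · rw [gc_val]
    linarith

lemma ghalf_T2 : convexHull ℝ {gOpt, gBpt, gPpt}
    ⊆ {x : EuclideanSpace ℝ (Fin 2) |
        Real.sin (π/5) * x 0 + Real.cos (π/5) * x 1 ≤ Real.sin (π/5) * ((1 + Real.sqrt 5) / 2)} := by
  apply convexHull_min ?_ (gconvex_le _ _ _)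
  rw [Set.insert_subset_iff, Set.insert_subset_iff, Set.singleton_subset_iff]
  refine ⟨?_, ?_, ?_⟩ <;> simp only [Set.mem_setOf_eq, gOpt0, gOpt1, gBpt0, gBpt1, gPpt0, gPpt1]
  · rw [mul_zero, mul_zero, add_zero]
    exact le_of_lt (mul_pos gs_pos gγ_pos)
  · rw [mul_zero, add_zero]
  · rw [gc_val]
    linarith

lemma gdisj : interior (convexHull ℝ {gBpt, gCpt, gPpt})
    ∩ interior (convexHull ℝ {gOpt, gBpt, gPpt}) = ∅ := by
  apply Set.eq_empty_of_subset_empty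
  calc interior (convexHull ℝ {gBpt, gCpt, gPpt}) ∩ interior (convexHull ℝ {gOpt, gBpt, gPpt})
      = interior (convexHull ℝ {gBpt, gCpt, gPpt} ∩ convexHull ℝ {gOpt, gBpt, gPpt}) :=
        (interior_inter).symm
    _ ⊆ interior {x : EuclideanSpace ℝ (Fin 2) |
          Real.sin (π/5) * x 0 + Real.cos (π/5) * x 1
            = Real.sin (π/5) * ((1 + Real.sqrt 5) / 2)} := by
        apply interior_mono
        rintro x ⟨h1, h2⟩
        exact le_antisymm (ghalf_T2 h2) (ghalf_T1 h1)
    _ = ∅ := gplane_empty _ _ _ gs_pos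

lemma gdist_PO : dist gPpt gOpt = 1 := by
  rw [dist_comm]; exact gdist_OP
lemma gdist_PB : dist gPpt gBpt = 1 := by
  rw [dist_comm]; exact gdist_BP


/-- Subdivision of the golden triangle: with γ = (1+√5)/2, the golden triangle T
with vertices O = (0,0), B = (γ,0), C = γ·(cos(π/5), sin(π/5)) splits, via the
point P = (cos(π/5), sin(π/5)) of the segment OC at distance 1 from O, into the
golden triangle T₁ = BCP (isoceles, |BP| = |BC| = 1, apex angle π/5 at B) and
the golden gnomon T₂ = OBP (isoceles, |PO| = |PB| = 1, apex angle 3π/5 at P),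
with disjoint interiors. -/
theorem golden_triangle_subdivision :
    let γ : ℝ := (1 + Real.sqrt 5) / 2
    let O : EuclideanSpace ℝ (Fin 2) := !₂[0, 0]
    let B : EuclideanSpace ℝ (Fin 2) := !₂[γ, 0]
    let P : EuclideanSpace ℝ (Fin 2) := !₂[Real.cos (π / 5), Real.sin (π / 5)]
    let C : EuclideanSpace ℝ (Fin 2) := γ • P
    let T : Set (EuclideanSpace ℝ (Fin 2)) := convexHull ℝ {O, B, C}
    let T₁ : Set (EuclideanSpace ℝ (Fin 2)) := convexHull ℝ {B, C, P}
    let T₂ : Set (EuclideanSpace ℝ (Fin 2)) := convexHull ℝ {O, B, P}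
    -- T is a golden triangle with apex angle π/5 at O, legs γ and base 1
    dist O B = γ ∧ dist O C = γ ∧ dist B C = 1 ∧
    EuclideanGeometry.angle B O C = π / 5 ∧
    -- P is the point of the segment OC at distance 1 from O
    dist O P = 1 ∧ P ∈ segment ℝ O C ∧
    -- T subdivides into T₁ and T₂ with disjoint interiors
    T = T₁ ∪ T₂ ∧
    interior T₁ ∩ interior T₂ = ∅ ∧
    -- T₁ is a golden triangle with legs 1 and apex angle π/5 at B
    dist B P = 1 ∧ dist B C = 1 ∧
    EuclideanGeometry.angle P B C = π / 5 ∧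
    -- T₂ is a golden gnomon with legs 1 and apex angle 3π/5 at P
    dist P O = 1 ∧ dist P B = 1 ∧
    EuclideanGeometry.angle O P B = 3 * π / 5 := by
  intro γ O B P C T T₁ T₂
  exact ⟨gdist_OB, gdist_OC, gdist_BC, gang_BOC, gdist_OP, gPseg, gunion, gdisj,
    gdist_BP, gdist_BC, gang_PBC, gdist_PO, gdist_PB, gang_OPB⟩
end
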